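/- Every prime p ≡ 7 (mod 12) can be written as p = N(α) where α = −1 + 2(1−ω)(2A+1 + Bω) for some integers A, B with B even, where ω is a primitive cube root of unity and N(x+yω) = x² − xy + y² is the norm on ℤ[ω]. -/

import Mathlib

lemma sq_mod4 (c : ℤ) : ∃ i, (c % 2 = 0 ∧ c^2 = 4*i) ∨ (c % 2 = 1 ∧ c^2 = 4*i + 1) := by
  rcases Int.even_or_odd c with ⟨i, hi⟩ | ⟨i, hi⟩ <;> subst hi
  · exact ⟨i*i, Or.inl ⟨by omega, by ring⟩⟩
  · exact ⟨i*i + i, Or.inr ⟨by omega, by ring⟩⟩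

lemma sq_mod3 (c : ℤ) : ∃ i, (c % 3 = 0 ∧ c^2 = 3*i) ∨ c^2 = 3*i + 1 := by
  have h3 : c % 3 = 0 ∨ c % 3 = 1 ∨ c % 3 = 2 := by omega
  obtain ⟨i, hi⟩ : ∃ i, c = 3*i + c % 3 := ⟨c / 3, by omega⟩
  rcases h3 with h | h | h <;> rw [h] at hi <;> subst hi
  · exact ⟨3*i*i, Or.inl ⟨by omega, by ring⟩⟩
  · exact ⟨3*i*i + 2*i, Or.inr (by ring)⟩
  · exact ⟨3*i*i + 4*i + 1, Or.inr (by ring)⟩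

lemma near (c M : ℤ) (hM : 0 < M) : ∃ r : ℤ, M ∣ (c - r) ∧ 4 * r^2 ≤ M^2 := by
  have h1 : 0 ≤ c % M := Int.emod_nonneg c (by omega)
  have h2 : c % M < M := Int.emod_lt_of_pos c hM
  have he : M * (c / M) + c % M = c := Int.mul_ediv_add_emod c M
  have hd : M ∣ c - c % M := ⟨c / M, by omega⟩
  by_cases h : 2 * (c % M) ≤ M
  · exact ⟨c % M, hd, by nlinarith⟩
  · refine ⟨c % M - M, ?_, by nlinarith⟩
    have : c - (c % M - M) = (c - c % M) + M := by ring
    rw [this]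
    exact dvd_add hd dvd_rfl

lemma descent (p : ℕ) (hp : p.Prime) : ∀ m : ℕ, 0 < m → m < p →
    (∃ c d : ℤ, c^2 + 3*d^2 = (m : ℤ) * (p : ℤ)) → ∃ x y : ℤ, x^2 + 3*y^2 = (p : ℤ) := by
  intro m
  induction m using Nat.strong_induction_on with
  | _ m ih =>
  rintro hm0 hmp ⟨c, d, hcd⟩
  rcases Nat.lt_or_ge m 2 with hm1 | hm2
  · have : m = 1 := by omega
    subst this
    exact ⟨c, d, by push_cast at hcd; linarith⟩
  have hM0 : 0 < (m:ℤ) := by omega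
  have hM2 : 2 ≤ (m:ℤ) := by omega
  have hppos := hp.pos
  haveI := Fact.mk hp
  have hpodd : p % 2 = 1 := (Nat.Prime.mod_two_eq_one_iff_ne_two hp).mpr (by omega)
  have hnotdvd : ¬ p ∣ m := fun hdd => by have := Nat.le_of_dvd hm0 hdd; omega
  obtain ⟨r, hr, hr4⟩ := near c (m:ℤ) hM0
  obtain ⟨s, hs, hs4⟩ := near d (m:ℤ) hM0
  have hMcd : (m:ℤ) ∣ c^2 + 3*d^2 := ⟨(p:ℤ), hcd⟩
  have hk : (m:ℤ) ∣ r^2 + 3*s^2 := by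
    have h1 : (m:ℤ) ∣ (c^2 + 3*d^2) - (r^2 + 3*s^2) := by
      have : (c^2 + 3*d^2) - (r^2 + 3*s^2) = (c - r)*(c + r) + 3*((d - s)*(d + s)) := by ring
      rw [this]
      exact dvd_add (hr.mul_right _) ((hs.mul_right _).mul_left 3)
    have := dvd_sub hMcd h1
    simpa using this
  obtain ⟨k, hkeq⟩ := hk
  have hk0 : 0 ≤ k := by nlinarith [sq_nonneg r, sq_nonneg s]
  have hkM : k ≤ (m:ℤ) := by nlinarith
  rcases eq_or_lt_of_le hk0 with hk0' | hkpos
  · -- k = 0 : r = s = 0, m ∣ c, m ∣ d, contradiction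
    exfalso
    have hr0 : r = 0 := by nlinarith [sq_nonneg r, sq_nonneg s]
    have hs0 : s = 0 := by nlinarith [sq_nonneg r, sq_nonneg s]
    rw [hr0] at hr; rw [hs0] at hs
    obtain ⟨u, hu⟩ : (m:ℤ) ∣ c := by simpa using hr
    obtain ⟨v, hv⟩ : (m:ℤ) ∣ d := by simpa using hs
    have hdvdP : (m:ℤ) ∣ (p:ℤ) := by
      refine ⟨u^2 + 3*v^2, mul_left_cancel₀ (show (m:ℤ) ≠ 0 by omega) ?_⟩
      rw [← hcd, hu, hv]; ring
    have hmp' : m ∣ p := by exact_mod_cast hdvdP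
    rcases hp.eq_one_or_self_of_dvd m hmp' with h | h <;> omega
  rcases eq_or_lt_of_le hkM with hkMeq | hklt
  · -- k = m: then 4r² = m², 4s² = m², and m ∣ 4p, so m ∣ 4
    rw [hkMeq] at hkeq
    have hMM : (m:ℤ) * (m:ℤ) = (m:ℤ)^2 := by ring
    have h4r : 4*r^2 = (m:ℤ)^2 := by linarith
    have h4s : 4*s^2 = (m:ℤ)^2 := by linarith
    have h2r : 2*r = (m:ℤ) ∨ 2*r = -(m:ℤ) := by
      have h0 : (2*r - (m:ℤ))*(2*r + (m:ℤ)) = 0 := by linear_combination h4r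
      rcases mul_eq_zero.mp h0 with h | h
      · left; linarith
      · right; linarith
    have h2s : 2*s = (m:ℤ) ∨ 2*s = -(m:ℤ) := by
      have h0 : (2*s - (m:ℤ))*(2*s + (m:ℤ)) = 0 := by linear_combination h4s
      rcases mul_eq_zero.mp h0 with h | h
      · left; linarith
      · right; linarith
    obtain ⟨u, hu⟩ := hr
    obtain ⟨v, hv⟩ := hs
    have hc : c = (m:ℤ)*u + r := by linarith
    have hd' : d = (m:ℤ)*v + s := by linarith
    subst hc
    subst hd'
    have hdvd4 : (m:ℤ) ∣ 4*(p:ℤ) := by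
      rcases h2r with h2r | h2r <;> rcases h2s with h2s | h2s
      · refine ⟨4 + 4*u + 4*u^2 + 12*v + 12*v^2, mul_left_cancel₀ (show (m:ℤ) ≠ 0 by omega) ?_⟩
        linear_combination (-4)*hcd + (2*r + (m:ℤ) + 4*(m:ℤ)*u)*h2r + (3*(2*s + (m:ℤ)) + 12*(m:ℤ)*v)*h2s
      · refine ⟨4 + 4*u + 4*u^2 - 12*v + 12*v^2, mul_left_cancel₀ (show (m:ℤ) ≠ 0 by omega) ?_⟩
        linear_combination (-4)*hcd + (2*r + (m:ℤ) + 4*(m:ℤ)*u)*h2r + (3*(2*s - (m:ℤ)) + 12*(m:ℤ)*v)*h2s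
      · refine ⟨4 - 4*u + 4*u^2 + 12*v + 12*v^2, mul_left_cancel₀ (show (m:ℤ) ≠ 0 by omega) ?_⟩
        linear_combination (-4)*hcd + (2*r - (m:ℤ) + 4*(m:ℤ)*u)*h2r + (3*(2*s + (m:ℤ)) + 12*(m:ℤ)*v)*h2s
      · refine ⟨4 - 4*u + 4*u^2 - 12*v + 12*v^2, mul_left_cancel₀ (show (m:ℤ) ≠ 0 by omega) ?_⟩
        linear_combination (-4)*hcd + (2*r - (m:ℤ) + 4*(m:ℤ)*u)*h2r + (3*(2*s - (m:ℤ)) + 12*(m:ℤ)*v)*h2s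
    have hdvd4' : m ∣ 4*p := by
      have h44 : ((4*p : ℕ) : ℤ) = 4*(p:ℤ) := by push_cast; ring
      rw [← h44] at hdvd4
      exact_mod_cast hdvd4
    have hcop : Nat.Coprime m p := (Nat.Prime.coprime_iff_not_dvd hp |>.mpr hnotdvd).symm
    have hm4 : m ∣ 4 := hcop.dvd_of_dvd_mul_right hdvd4'
    have hm4' : m ≤ 4 := Nat.le_of_dvd (by norm_num) hm4
    interval_cases m
    · -- m = 2: parity contradiction
      exfalso
      push_cast at hcd h2r h2s
      have hr1 : r = 1 ∨ r = -1 := by omega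
      have hs1 : s = 1 ∨ s = -1 := by omega
      obtain ⟨i, hi⟩ := sq_mod4 (2*u + r)
      obtain ⟨j, hj⟩ := sq_mod4 (2*v + s)
      rcases hi with ⟨hie, _⟩ | ⟨_, hi⟩
      · omega
      rcases hj with ⟨hje, _⟩ | ⟨_, hj⟩
      · omega
      rw [hi, hj] at hcd
      omega
    · -- m = 3: 3 ∤ 4
      exfalso; omega
    · -- m = 4: c, d both even, divide by 2
      push_cast at hcd h2r h2s
      obtain ⟨r0, hr0⟩ : ∃ r0, r = 2*r0 := by
        rcases h2r with h | h
        · exact ⟨1, by omega⟩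
        · exact ⟨-1, by omega⟩
      obtain ⟨s0, hs0⟩ : ∃ s0, s = 2*s0 := by
        rcases h2s with h | h
        · exact ⟨1, by omega⟩
        · exact ⟨-1, by omega⟩
      subst hr0
      subst hs0
      refine ⟨2*u + r0, 2*v + s0, mul_left_cancel₀ (show (4:ℤ) ≠ 0 by norm_num) ?_⟩
      linear_combination hcd
  · -- 0 < k < m: descent step
    have he' : (m:ℤ) ∣ c*r + 3*d*s := by
      have h1 : (m:ℤ) ∣ (c*r + 3*d*s) - (r^2 + 3*s^2) := by
        have : (c*r + 3*d*s) - (r^2 + 3*s^2) = r*(c - r) + 3*(s*(d - s)) := by ring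
        rw [this]
        exact dvd_add (hr.mul_left _) ((hs.mul_left _).mul_left 3)
      have h2 : (m:ℤ) ∣ r^2 + 3*s^2 := ⟨k, hkeq⟩
      have := dvd_add h1 h2
      simpa using this
    have hf' : (m:ℤ) ∣ c*s - d*r := by
      have : c*s - d*r = s*(c - r) - r*(d - s) := by ring
      rw [this]
      exact dvd_sub (hr.mul_left _) (hs.mul_left _)
    obtain ⟨e, he⟩ := he'
    obtain ⟨f, hf⟩ := hf'
    have hkey : e^2 + 3*f^2 = k * (p:ℤ) := by
      refine mul_left_cancel₀ (show (m:ℤ)^2 ≠ 0 by positivity) ?_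
      have hid : ((m:ℤ)*(p:ℤ)) * ((m:ℤ)*k) = ((m:ℤ)*e)^2 + 3*((m:ℤ)*f)^2 := by
        rw [← hcd, ← hkeq, ← he, ← hf]; ring
      linear_combination -hid
    refine ih k.toNat (by omega) (by omega) (by omega) ⟨e, f, ?_⟩
    rw [hkey]
    congr 1
    omega

lemma exists_rep (p : ℕ) (hp : p.Prime) (h7 : p % 12 = 7) :
    ∃ x y : ℤ, x^2 + 3*y^2 = (p : ℤ) := by
  haveI := Fact.mk hp
  have hp7 : 7 ≤ p := by omega
  have hdvd : 3 ∣ Fintype.card (ZMod p)ˣ := by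
    rw [ZMod.card_units_eq_totient, Nat.totient_prime hp]; omega
  obtain ⟨ζ, hζ⟩ := exists_prime_orderOf_dvd_card (G := (ZMod p)ˣ) 3 hdvd
  set z : ZMod p := (ζ : ZMod p) with hzdef
  have hz3 : z^3 = 1 := by
    have h1 : ζ^3 = 1 := by rw [← hζ]; exact pow_orderOf_eq_one ζ
    have := congrArg (Units.coeHom (ZMod p)) h1
    simpa using this
  have hz1 : z ≠ 1 := by
    intro hh
    have : ζ = 1 := Units.ext hh
    rw [this] at hζ
    simp at hζ
  have hsum : z^2 + z + 1 = 0 := by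
    have h0 : (z - 1) * (z^2 + z + 1) = 0 := by linear_combination hz3
    rcases mul_eq_zero.mp h0 with hh | hh
    · exact absurd (by linear_combination hh : z = 1) hz1
    · exact hh
  have hw : (2*z+1)^2 = -3 := by linear_combination 4*hsum
  set c : ℤ := ((2*z+1 : ZMod p).val : ℤ) with hcdef
  have hc0 : 0 ≤ c := by positivity
  have hclt : c < p := by
    have := ZMod.val_lt (2*z+1 : ZMod p)
    omega
  have hdvdc : (p:ℤ) ∣ c^2 + 3 := by
    have hcc : ((c:ℤ) : ZMod p) = 2*z+1 := by
      rw [hcdef]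
      simp [ZMod.natCast_val, ZMod.cast_id]
    have hcast : ((c^2 + 3 : ℤ) : ZMod p) = 0 := by
      push_cast
      rw [hcc, hw]
      ring
    exact (ZMod.intCast_zmod_eq_zero_iff_dvd _ p).mp hcast
  -- replace c by min(c, p - c)
  have hkey : ∃ c1 : ℤ, 0 ≤ c1 ∧ 2*c1 ≤ p ∧ (p:ℤ) ∣ c1^2 + 3 := by
    by_cases hle : 2*c ≤ (p:ℤ)
    · exact ⟨c, hc0, hle, hdvdc⟩
    · refine ⟨(p:ℤ) - c, by omega, by omega, ?_⟩
      have : ((p:ℤ) - c)^2 + 3 = (c^2 + 3) + (p:ℤ)*((p:ℤ) - 2*c) := by ring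
      rw [this]
      exact dvd_add hdvdc (dvd_mul_right _ _)
  obtain ⟨c1, hc10, hc1le, ⟨t, ht⟩⟩ := hkey
  have ht0 : 0 < t := by nlinarith
  have htp : t < (p:ℤ) := by nlinarith
  refine descent p hp t.toNat (by omega) (by omega) ⟨c1, 1, ?_⟩
  have htt : ((t.toNat : ℤ)) = t := by omega
  rw [htt]
  linarith [ht]

theorem prime_7_mod_12_norm_form (p : ℕ) (hp : p.Prime) (h : p % 12 = 7) :
    let ω : ℂ := Complex.exp (2 * Real.pi * Complex.I / 3)
    ∃ A B : ℤ, Even B ∧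
      (p : ℂ) = (-1 + 2*(1 - ω)*(2*(A:ℂ)+1 + (B:ℂ)*ω)) *
        (starRingEnd ℂ) (-1 + 2*(1 - ω)*(2*(A:ℂ)+1 + (B:ℂ)*ω)) := by
  intro ω
  obtain ⟨x, y, hxy⟩ := exists_rep p hp h
  have hx2 : x % 2 = 0 ∧ y % 2 = 1 := by
    obtain ⟨i, hi⟩ := sq_mod4 x
    obtain ⟨j, hj⟩ := sq_mod4 y
    rcases hi with ⟨h1, hi⟩ | ⟨h1, hi⟩ <;> rcases hj with ⟨h2, hj⟩ | ⟨h2, hj⟩ <;>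
      rw [hi, hj] at hxy <;> omega
  obtain ⟨hx2, hy2⟩ := hx2
  have hx3 : x % 3 ≠ 0 := by
    intro h0
    obtain ⟨k, hk⟩ : ∃ k, x = 3*k := ⟨x/3, by omega⟩
    subst hk
    obtain ⟨i, hi⟩ : ∃ i, (3*k)^2 = 9*i := ⟨k*k, by ring⟩
    obtain ⟨j, hj⟩ := sq_mod3 y
    rw [hi] at hxy
    rcases hj with ⟨_, hj⟩ | hj <;> rw [hj] at hxy <;> omega
  obtain ⟨a, ha3, ha2, hasq⟩ : ∃ a : ℤ, a % 3 = 2 ∧ a % 2 = 0 ∧ a^2 = x^2 := by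
    rcases (show x % 3 = 1 ∨ x % 3 = 2 by omega) with h1 | h1
    · exact ⟨-x, by omega, by omega, by ring⟩
    · exact ⟨x, h1, hx2, rfl⟩
  obtain ⟨b, hb2, hab4, hbsq⟩ : ∃ b : ℤ, b % 2 = 1 ∧ (a+b) % 4 = 1 ∧ b^2 = y^2 := by
    rcases (show (a+y) % 4 = 1 ∨ (a-y) % 4 = 1 by omega) with h1 | h1
    · exact ⟨y, hy2, h1, rfl⟩
    · exact ⟨-y, by omega, by omega, by ring⟩
  have hab : a^2 + 3*b^2 = (p:ℤ) := by rw [hasq, hbsq]; exact hxy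
  obtain ⟨K, hK⟩ : ∃ K, a + 3*b + 1 = 12*K := ⟨(a+3*b+1)/12, by omega⟩
  obtain ⟨J, hJ⟩ : ∃ J, a + b - 1 = 4*J := ⟨(a+b-1)/4, by omega⟩
  refine ⟨J - K, 2*K, ⟨K, by ring⟩, ?_⟩
  -- ω facts
  have hexp : ω = Complex.exp (2 * Real.pi * Complex.I / 3) := rfl
  have hω0 : ω ≠ 0 := Complex.exp_ne_zero _
  have hprim : IsPrimitiveRoot ω 3 := Complex.isPrimitiveRoot_exp 3 (by norm_num)
  have hω3 : ω^3 = 1 := hprim.pow_eq_one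
  have hne1 : ω ≠ 1 := hprim.ne_one (by norm_num)
  have hsq : ω^2 = -1 - ω := by
    have h0 : (ω - 1)*(ω^2 + ω + 1) = 0 := by linear_combination hω3
    rcases mul_eq_zero.mp h0 with h1 | h1
    · exact absurd (by linear_combination h1) hne1
    · linear_combination h1
  have hconj : (starRingEnd ℂ) ω = ω^2 := by
    have hmul : ω * (starRingEnd ℂ) ω = 1 := by
      rw [hexp, ← Complex.exp_conj, ← Complex.exp_add]
      rw [show (2 * (Real.pi:ℂ) * Complex.I / 3) +
          (starRingEnd ℂ) (2 * (Real.pi:ℂ) * Complex.I / 3) = 0 by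
        simp [map_div₀, map_mul, map_ofNat, Complex.conj_I, Complex.conj_ofReal]; ring]
      exact Complex.exp_zero
    have hmul2 : ω * ω^2 = 1 := by rw [← hω3]; ring
    exact mul_left_cancel₀ hω0 (by rw [hmul, hmul2])
  -- cast hypotheses to ℂ
  have hJc : (a:ℂ) + (b:ℂ) - 1 = 4*(J:ℂ) := by exact_mod_cast hJ
  have hKc : (a:ℂ) + 3*(b:ℂ) + 1 = 12*(K:ℂ) := by exact_mod_cast hK
  have hZc : (p:ℂ) = ((a:ℂ)+(b:ℂ))^2 - ((a:ℂ)+(b:ℂ))*(2*(b:ℂ)) + (2*(b:ℂ))^2 := by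
    have : (p:ℂ) = ((a:ℂ))^2 + 3*((b:ℂ))^2 := by exact_mod_cast hab.symm
    rw [this]; ring
  have e1 : -1 + 2*(1 - ω)*(2*((J-K:ℤ):ℂ)+1 + ((2*K:ℤ):ℂ)*ω)
      = ((a:ℂ)+(b:ℂ)) + (2*(b:ℂ))*ω := by
    push_cast
    linear_combination (-4*(K:ℂ))*hsq + (ω - 1)*hJc + (-ω)*hKc
  have e2 : (starRingEnd ℂ) (-1 + 2*(1 - ω)*(2*((J-K:ℤ):ℂ)+1 + ((2*K:ℤ):ℂ)*ω))
      = ((a:ℂ)+(b:ℂ)) + (2*(b:ℂ))*(-1-ω) := by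
    conv_lhs => rw [e1]
    simp only [map_add, map_mul, map_ofNat, map_intCast, hconj]
    rw [hsq]
  rw [e2, e1]
  linear_combination hZc + (2*(b:ℂ))^2 * hsq
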